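/- In any weighted-k-atomic valid total order for the bin-packing reduction instance, any long write placed between w(i) and r(i-1) (for 2 ≤ i ≤ m) can be moved to between r(i-1) and w(i+1), and the resulting total order is still valid and weighted-k-atomic. -/

import Mathlib

open scoped Classical

/-- An operation in a weighted history: start/finish times (rational), type,
value, and a weight (relevant for writes). -/
structure WOp where
  s : ℚ
  f : ℚ
  isRead : Bool
  val : ℕ
  wt : ℕ
deriving DecidableEq

/-- `a` occurs before `b` in the total order represented by the list `l`. -/
def WBefore (l : List WOp) (a b : WOp) : Prop :=
  ∃ l1 l2 l3, l = l1 ++ a :: l2 ++ b :: l3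

/-- A total order is valid if it respects real-time precedence. -/
def WValid (l : List WOp) : Prop :=
  ∀ a ∈ l, ∀ b ∈ l, a.f < b.s → WBefore l a b

/-- In the total order `l`, every read follows its dictating write, and the total
weight of the writes ordered at or after the dictating write and before the read
(including the dictating write itself) is at most `k`. -/
def WKAtomicOrder (k : ℕ) (l : List WOp) : Prop :=
  ∀ r ∈ l, r.isRead = true → ∀ w ∈ l, w.isRead = false → w.val = r.val →
    ∃ l1 l2 l3, l = l1 ++ w :: l2 ++ r :: l3 ∧
      w.wt + ((l2.filter (fun op => op.isRead = false)).map WOp.wt).sum ≤ k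

/-- A weighted history (given as a list of operations) is weighted-`k`-atomic if
some valid total order of its operations satisfies the weighted separation bound. -/
def WeightedKAtomic (k : ℕ) (H : List WOp) : Prop :=
  ∃ l : List WOp, l.Perm H ∧ WValid l ∧ WKAtomicOrder k l

/-- Well-formedness of a weighted history. -/
def WWf (H : List WOp) : Prop :=
  H.Nodup ∧
  (∀ op ∈ H, op.s < op.f) ∧
  (∀ op1 ∈ H, ∀ op2 ∈ H, op1 ≠ op2 → op1.s ≠ op2.s ∧ op1.f ≠ op2.f ∧ op1.s ≠ op2.f) ∧
  (∀ w1 ∈ H, ∀ w2 ∈ H, w1.isRead = false → w2.isRead = false → w1.val = w2.val → w1 = w2) ∧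
  (∀ w ∈ H, w.isRead = false → 0 < w.wt) ∧
  (∀ r ∈ H, r.isRead = true → ∃ w ∈ H, w.isRead = false ∧ w.val = r.val ∧ w.f < r.s)

/-- Bin packing: `n` items with sizes `sz` can be partitioned into `m` bins each
of total size at most `B`. -/
def BinPackingSolvable (n m B : ℕ) (sz : Fin n → ℕ) : Prop :=
  ∃ assign : Fin n → Fin m, ∀ b : Fin m,
    ∑ i ∈ Finset.univ.filter (fun i => assign i = b), sz i ≤ B

/-- The `i`-th short write `w(i)` (weight 1). -/
def shortW (i : ℕ) : WOp := ⟨3 * i, 3 * i + 1, false, i, 1⟩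

/-- The `i`-th read `r(i)`, a dictated read of `w(i)`, positioned after `w(i+1)`
and before `w(i+2)`. -/
def readOp (i : ℕ) : WOp := ⟨3 * i + 4 + 1/4, 3 * i + 5 + 1/2, true, i, 1⟩

/-- The `j`-th long write, with weight `sz j` and no dictated reads, forced after
`w(1)` and before `w(m+1)` but concurrent with everything in between. -/
def longW (n m : ℕ) (sz : Fin n → ℕ) (j : Fin n) : WOp :=
  ⟨4 + ((j : ℚ) + 1) / (2 * n + 5), 3 * m + 3 - ((j : ℚ) + 1) / (2 * n + 5),
    false, m + 2 + j, sz j⟩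

/-- The weighted history constructed from a bin-packing instance: short writes
`w(1), …, w(m+1)`, reads `r(1), …, r(m)`, and `n` long writes. -/
def reduction (n m : ℕ) (sz : Fin n → ℕ) : List WOp :=
  ((List.range' 1 (m + 1)).map shortW) ++ ((List.range' 1 m).map readOp) ++
    ((List.finRange n).map (longW n m sz))

open List in
lemma split_unique {α : Type*} {a : α} :
    ∀ {A : List α} {C B D : List α}, A ++ a :: B = C ++ a :: D → a ∉ A → a ∉ C →
      A = C ∧ B = D := by
  intro A
  induction A with
  | nil =>
    intro C B D h hA hC
    cases C with
    | nil => simpa using h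
    | cons c C' =>
      simp only [List.nil_append, List.cons_append, List.cons.injEq] at h
      exact absurd (h.1 ▸ (List.mem_cons_self : c ∈ c :: C') : a ∈ c :: C') hC
  | cons x A' ih =>
    intro C B D h hA hC
    cases C with
    | nil =>
      simp only [List.cons_append, List.nil_append, List.cons.injEq] at h
      exact absurd (h.1.symm ▸ (List.mem_cons_self : x ∈ x :: A') : a ∈ x :: A') hA
    | cons c C' =>
      simp only [List.cons_append, List.cons.injEq] at h
      obtain ⟨rfl, h2⟩ := h
      have := ih h2 (fun hx => hA (List.mem_cons_of_mem _ hx))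
        (fun hx => hC (List.mem_cons_of_mem _ hx))
      exact ⟨by rw [this.1], this.2⟩

lemma nodup_split {α : Type*} {a : α} {X Y : List α} (h : (X ++ a :: Y).Nodup) :
    a ∉ X ∧ a ∉ Y := by
  rw [List.nodup_append] at h
  refine ⟨fun hx => h.2.2 a hx a List.mem_cons_self rfl, ?_⟩
  have := h.2.1
  rw [List.nodup_cons] at this
  exact this.1

open List in
lemma wbefore_iff_sublist {l : List WOp} {a b : WOp} :
    WBefore l a b ↔ [a, b] <+ l := by
  constructor
  · rintro ⟨l1, l2, l3, rfl⟩
    have h1 : [b] <+ b :: l3 := (List.nil_sublist l3).cons₂ b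
    have h2 : [b] <+ l2 ++ b :: l3 := h1.trans (List.sublist_append_right l2 _)
    have h3 : [a, b] <+ a :: (l2 ++ b :: l3) := h2.cons₂ a
    have h4 : [a, b] <+ l1 ++ a :: (l2 ++ b :: l3) :=
      h3.trans (List.sublist_append_right l1 _)
    simpa [List.append_assoc] using h4
  · intro h
    induction l with
    | nil => simp at h
    | cons x t ih =>
      cases h with
      | cons _ h' =>
        obtain ⟨l1, l2, l3, rfl⟩ := ih h'
        exact ⟨x :: l1, l2, l3, rfl⟩
      | cons_cons _ h' =>
        have hb : b ∈ t := h'.subset (List.mem_singleton_self b)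
        obtain ⟨s, u, rfl⟩ := List.append_of_mem hb
        exact ⟨[], s, u, rfl⟩

open List in
lemma sublist_erase {α : Type*} [DecidableEq α] {s l : List α} {a : α}
    (h : s <+ l) (ha : a ∉ s) : s <+ l.erase a := by
  induction h with
  | slnil => simp
  | cons b h ih =>
    by_cases hb : b = a
    · subst hb; rw [List.erase_cons_head]; exact h
    · rw [List.erase_cons_tail (by simpa using hb)]
      exact (ih ha).cons b
  | cons_cons b h ih =>
    rw [List.mem_cons, not_or] at ha
    obtain ⟨hba, ha'⟩ := ha
    rw [List.erase_cons_tail (by simpa using fun hh : b = a => hba hh.symm)]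
    exact (ih ha').cons₂ b

lemma wbefore_asymm {l : List WOp} {a b : WOp} (hnd : l.Nodup)
    (h1 : WBefore l a b) (h2 : WBefore l b a) : False := by
  obtain ⟨P, Q, R, hP⟩ := h1
  obtain ⟨P', Q', R', hP'⟩ := h2
  have hPn : l = P ++ a :: (Q ++ b :: R) := by simp [hP, List.append_assoc]
  have hnd1 := hPn ▸ hnd
  have hnd2 := hP' ▸ hnd
  have e := hPn.symm.trans hP'
  obtain ⟨hPeq, -⟩ := split_unique e (nodup_split hnd1).1 (nodup_split hnd2).1
  have hbP : b ∈ P := by rw [hPeq]; simp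
  rw [List.nodup_append] at hnd1
  exact hnd1.2.2 b hbP b (by simp) rfl

lemma mem_suffix_of_wbefore {l X Y : List WOp} {c b : WOp} (hnd : l.Nodup)
    (hl : l = X ++ c :: Y) (h : WBefore l c b) : ∃ Y1 Y2, Y = Y1 ++ b :: Y2 := by
  obtain ⟨P, Q, R, hP⟩ := h
  have hPn : l = P ++ c :: (Q ++ b :: R) := by simp [hP, List.append_assoc]
  have e := hl.symm.trans hPn
  obtain ⟨-, hY⟩ := split_unique e (nodup_split (hl ▸ hnd)).1 (nodup_split (hPn ▸ hnd)).1
  exact ⟨Q, R, hY⟩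

lemma mem_prefix_of_wbefore {l X Y : List WOp} {c a : WOp} (hnd : l.Nodup)
    (hl : l = X ++ c :: Y) (h : WBefore l a c) : ∃ X1 X2, X = X1 ++ a :: X2 := by
  obtain ⟨P, Q, R, hP⟩ := h
  have e := hl.symm.trans hP
  obtain ⟨hX, -⟩ := split_unique e (nodup_split (hl ▸ hnd)).1 (nodup_split (hP ▸ hnd)).1
  exact ⟨P, Q, hX⟩

lemma mem_reduction_iff {n m : ℕ} {sz : Fin n → ℕ} {x : WOp} :
    x ∈ reduction n m sz ↔
      (∃ t, 1 ≤ t ∧ t ≤ m + 1 ∧ x = shortW t) ∨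
      (∃ t, 1 ≤ t ∧ t ≤ m ∧ x = readOp t) ∨
      (∃ j : Fin n, x = longW n m sz j) := by
  simp only [reduction, List.mem_append, List.mem_map, List.mem_range'_1, List.mem_finRange,
    true_and]
  constructor
  · rintro ((⟨t, ⟨ht1, ht2⟩, rfl⟩ | ⟨t, ⟨ht1, ht2⟩, rfl⟩) | ⟨j, rfl⟩)
    · exact Or.inl ⟨t, ht1, by omega, rfl⟩
    · exact Or.inr (Or.inl ⟨t, ht1, by omega, rfl⟩)
    · exact Or.inr (Or.inr ⟨j, rfl⟩)
  · rintro (⟨t, ht1, ht2, rfl⟩ | ⟨t, ht1, ht2, rfl⟩ | ⟨j, rfl⟩)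
    · exact Or.inl (Or.inl ⟨t, ⟨ht1, by omega⟩, rfl⟩)
    · exact Or.inl (Or.inr ⟨t, ⟨ht1, by omega⟩, rfl⟩)
    · exact Or.inr ⟨j, rfl⟩

lemma shortW_ne_readOp {a b : ℕ} : shortW a ≠ readOp b := by
  intro h
  have := congrArg WOp.isRead h
  simp [shortW, readOp] at this

lemma shortW_ne_longW {a n m : ℕ} {sz : Fin n → ℕ} {j : Fin n} (h : a ≤ m + 1) :
    shortW a ≠ longW n m sz j := by
  intro hh
  have := congrArg WOp.val hh
  simp only [shortW, longW] at this
  omega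

lemma readOp_ne_longW {a n m : ℕ} {sz : Fin n → ℕ} {j : Fin n} :
    readOp a ≠ longW n m sz j := by
  intro h
  have := congrArg WOp.isRead h
  simp [readOp, longW] at this

lemma nodup_reduction (n m : ℕ) (sz : Fin n → ℕ) : (reduction n m sz).Nodup := by
  have h1 : ((List.range' 1 (m + 1)).map shortW).Nodup :=
    (List.nodup_range' : (List.range' 1 (m + 1)).Nodup).map (fun a b h => by
      have := congrArg WOp.val h; simpa [shortW] using this)
  have h2 : ((List.range' 1 m).map readOp).Nodup :=
    (List.nodup_range' : (List.range' 1 m).Nodup).map (fun a b h => by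
      have := congrArg WOp.val h; simpa [readOp] using this)
  have h3 : ((List.finRange n).map (longW n m sz)).Nodup :=
    (List.nodup_finRange n).map (fun a b h => by
      have := congrArg WOp.val h
      simp only [longW] at this
      exact Fin.ext (by omega))
  rw [reduction, List.nodup_append, List.nodup_append]
  refine ⟨⟨h1, h2, ?_⟩, h3, ?_⟩
  · intro x hx y hy hxy
    subst hxy
    simp only [List.mem_map, List.mem_range'_1] at hx hy
    obtain ⟨a, -, rfl⟩ := hx
    obtain ⟨b, -, hb⟩ := hy
    exact shortW_ne_readOp hb.symm
  · intro x hx y hy hxy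
    subst hxy
    simp only [List.mem_append, List.mem_map, List.mem_range'_1, List.mem_finRange,
      true_and] at hx hy
    obtain ⟨j, hj⟩ := hy
    rcases hx with ⟨a, ⟨ha1, ha2⟩, rfl⟩ | ⟨a, -, rfl⟩
    · exact shortW_ne_longW (by omega) hj.symm
    · exact readOp_ne_longW hj.symm

lemma eps_pos (n : ℕ) (j : Fin n) : 0 < ((j : ℚ) + 1) / (2 * (n : ℚ) + 5) := by positivity

lemma eps_lt_half (n : ℕ) (j : Fin n) : ((j : ℚ) + 1) / (2 * (n : ℚ) + 5) < 1 / 2 := by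
  rw [div_lt_iff₀ (by positivity)]
  have hj : ((j : ℕ) : ℚ) < (n : ℚ) := by exact_mod_cast j.isLt
  linarith

lemma early_elem {n m : ℕ} {sz : Fin n → ℕ} {x : WOp} (hm : 1 ≤ m) (j : Fin n)
    (hx : x ∈ reduction n m sz) (h : x.f < (longW n m sz j).s) : x = shortW 1 := by
  have he1 := eps_pos n j
  have he2 := eps_lt_half n j
  rcases mem_reduction_iff.mp hx with ⟨t, ht1, ht2, rfl⟩ | ⟨t, ht1, ht2, rfl⟩ | ⟨j', rfl⟩
  · simp only [shortW, longW] at h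
    have : t = 1 := by
      by_contra hne
      have h2 : (2 : ℚ) ≤ (t : ℚ) := by exact_mod_cast (by omega : 2 ≤ t)
      linarith
    rw [this]
  · simp only [readOp, longW] at h
    have h1 : (1 : ℚ) ≤ (t : ℚ) := by exact_mod_cast ht1
    linarith
  · have he1' := eps_pos n j'
    have he2' := eps_lt_half n j'
    simp only [longW] at h
    have hm' : (1 : ℚ) ≤ (m : ℚ) := by exact_mod_cast hm
    linarith

lemma late_elem {n m : ℕ} {sz : Fin n → ℕ} {x : WOp} (hm : 1 ≤ m) (j : Fin n)
    (hx : x ∈ reduction n m sz) (h : (longW n m sz j).f < x.s) :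
    x = shortW (m + 1) ∨ x = readOp m := by
  have he1 := eps_pos n j
  have he2 := eps_lt_half n j
  have hm' : (1 : ℚ) ≤ (m : ℚ) := by exact_mod_cast hm
  rcases mem_reduction_iff.mp hx with ⟨t, ht1, ht2, rfl⟩ | ⟨t, ht1, ht2, rfl⟩ | ⟨j', rfl⟩
  · simp only [shortW, longW] at h
    have : t = m + 1 := by
      by_contra hne
      have hle : (t : ℚ) ≤ (m : ℚ) := by exact_mod_cast (by omega : t ≤ m)
      linarith
    exact Or.inl (by rw [this])
  · simp only [readOp, longW] at h
    have : t = m := by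
      by_contra hne
      have hle : (t : ℚ) + 1 ≤ (m : ℚ) := by exact_mod_cast (by omega : t + 1 ≤ m)
      linarith
    exact Or.inr (by rw [this])
  · have he1' := eps_pos n j'
    have he2' := eps_lt_half n j'
    simp only [longW] at h
    linarith

/-- Total write-weight of a segment. -/
def S (Q : List WOp) : ℕ := ((Q.filter (fun op => op.isRead = false)).map WOp.wt).sum

lemma S_append (A B : List WOp) : S (A ++ B) = S A + S B := by
  simp [S]

lemma S_cons (x : WOp) (A : List WOp) :
    S (x :: A) = (if x.isRead = false then x.wt else 0) + S A := by
  by_cases h : x.isRead = false <;> simp [S, List.filter_cons, h]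

/-- In any weighted-`k`-atomic valid total order for the bin-packing reduction
instance, a long write placed between `w(i)` and `r(i-1)` (for `2 ≤ i ≤ m`) can
be moved to between `r(i-1)` and `w(i+1)`, keeping the total order valid and
weighted-`k`-atomic. -/
theorem stmt_11 (n m B : ℕ) (sz : Fin n → ℕ) (hsz : ∀ i, 0 < sz i) (hm : 1 ≤ m)
    (k : ℕ) (l : List WOp) (hperm : l.Perm (reduction n m sz)) (hvalid : WValid l)
    (hatomic : WKAtomicOrder k l)
    (j : Fin n) (i : ℕ) (hi1 : 2 ≤ i) (hi2 : i ≤ m)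
    (hplace1 : WBefore l (shortW i) (longW n m sz j))
    (hplace2 : WBefore l (longW n m sz j) (readOp (i - 1))) :
    ∃ l' : List WOp,
      l'.erase (longW n m sz j) = l.erase (longW n m sz j) ∧
      l'.Perm (reduction n m sz) ∧ WValid l' ∧ WKAtomicOrder k l' ∧
      WBefore l' (readOp (i - 1)) (longW n m sz j) ∧
      WBefore l' (longW n m sz j) (shortW (i + 1)) := by
  classical
  set L := longW n m sz j with hLdef
  set r := readOp (i - 1) with hrdef
  obtain ⟨l1, l2, l3, hl⟩ := hplace2
  have hndred := nodup_reduction n m sz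
  have hnd : l.Nodup := hperm.nodup_iff.mpr hndred
  have hln : l = l1 ++ L :: (l2 ++ r :: l3) := by simp [hl, List.append_assoc]
  have hnd1 := hln ▸ hnd
  have hLl1 : L ∉ l1 := (nodup_split hnd1).1
  have hLl23 : L ∉ l2 ++ r :: l3 := (nodup_split hnd1).2
  have hLl2 : L ∉ l2 := fun h => hLl23 (by simp [h])
  have hLr : L ≠ r := fun h => hLl23 (by simp [h])
  have hnt : (l2 ++ r :: l3).Nodup := by
    have h2 := hnd1
    rw [List.nodup_append] at h2
    exact (List.nodup_cons.mp h2.2.1).2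
  have hrl2 : r ∉ l2 := (nodup_split hnt).1
  have hrl3 : r ∉ l3 := (nodup_split hnt).2
  have hlr : l = (l1 ++ L :: l2) ++ r :: l3 := by simp [hl, List.append_assoc]
  have hrl : r ∈ l := by rw [hl]; simp
  have hLl : L ∈ l := by rw [hl]; simp
  have hmem : ∀ x : WOp, x ∈ l ↔ x ∈ reduction n m sz := fun x => hperm.mem_iff
  have hicast : ((i - 1 : ℕ) : ℚ) = (i : ℚ) - 1 := by
    rw [Nat.cast_sub (by omega : 1 ≤ i)]; norm_num
  have himq : (i : ℚ) ≤ (m : ℚ) := by exact_mod_cast hi2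
  -- the new order
  have hpl : (l1 ++ l2 ++ r :: L :: l3).Perm l := by
    rw [hln]
    have h := List.Perm.append_left l1 (List.perm_middle (a := L) (l₁ := l2 ++ [r]) (l₂ := l3))
    simpa [List.append_assoc] using h
  have he : (l1 ++ l2 ++ r :: L :: l3).erase L = l.erase L := by
    have hrL : ¬(r == L) = true := by simpa using fun h : r = L => hLr h.symm
    have hLl12 : L ∉ l1 ++ l2 := by
      simp only [List.mem_append]
      exact fun h => h.elim hLl1 hLl2
    rw [hln, List.erase_append_right _ hLl12, List.erase_append_right _ hLl1,
      List.erase_cons_tail hrL, List.erase_cons_head, List.erase_cons_head]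
    simp [List.append_assoc]
  refine ⟨l1 ++ l2 ++ r :: L :: l3, he, hpl.trans hperm, ?_, ?_, ?_, ?_⟩
  · -- validity
    intro a ha b hb hab
    have hal : a ∈ l := hpl.mem_iff.mp ha
    have hbl : b ∈ l := hpl.mem_iff.mp hb
    by_cases haL : a = L
    · subst haL
      by_cases hbL : b = L
      · subst hbL
        exfalso
        rw [hLdef] at hab
        simp only [longW] at hab
        have hm' : (1 : ℚ) ≤ (m : ℚ) := by exact_mod_cast hm
        have := eps_pos n j
        have := eps_lt_half n j
        linarith
      · have hlate := late_elem hm j ((hmem b).mp hbl) (by rw [hLdef] at hab; exact hab)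
        have hrb : r.f < b.s := by
          rcases hlate with rfl | rfl
          · rw [hrdef]; simp only [readOp, shortW]
            rw [hicast]; push_cast; linarith
          · rw [hrdef]; simp only [readOp]
            rw [hicast]; push_cast; linarith
        have hwb : WBefore l r b := hvalid r hrl b hbl hrb
        obtain ⟨Y1, Y2, hY⟩ := mem_suffix_of_wbefore hnd hlr hwb
        exact ⟨l1 ++ l2 ++ [r], Y1, Y2, by simp [hY, List.append_assoc]⟩
    · by_cases hbL : b = L
      · subst hbL
        have h1 : a = shortW 1 := early_elem hm j ((hmem a).mp hal)
          (by rw [hLdef] at hab; exact hab)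
        have haL' : WBefore l a L := hvalid a hal L hLl hab
        obtain ⟨X1, X2, hX⟩ := mem_prefix_of_wbefore hnd hln haL'
        exact ⟨X1, X2 ++ l2 ++ [r], l3, by simp [hX, List.append_assoc]⟩
      · have h0 : WBefore l a b := hvalid a hal b hbl hab
        have s1 := wbefore_iff_sublist.mp h0
        have hLab : L ∉ [a, b] := by
          intro hm'
          simp only [List.mem_cons, List.not_mem_nil, or_false] at hm'
          rcases hm' with h | h
          · exact haL h.symm
          · exact hbL h.symm
        have s2 := sublist_erase s1 hLab
        rw [← he] at s2
        exact wbefore_iff_sublist.mpr (s2.trans List.erase_sublist)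
  · -- k-atomicity
    intro ρ hρ hρr ω hω hωr hval
    have hρl : ρ ∈ l := hpl.mem_iff.mp hρ
    have hωl : ω ∈ l := hpl.mem_iff.mp hω
    obtain ⟨t, ht1, ht2, rfl⟩ : ∃ t, 1 ≤ t ∧ t ≤ m ∧ ρ = readOp t := by
      rcases mem_reduction_iff.mp ((hmem ρ).mp hρl) with ⟨t, h1, h2, rfl⟩ | ⟨t, h1, h2, rfl⟩ |
        ⟨j', rfl⟩
      · simp [shortW] at hρr
      · exact ⟨t, h1, h2, rfl⟩
      · simp [longW] at hρr
    obtain rfl : ω = shortW t := by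
      rcases mem_reduction_iff.mp ((hmem ω).mp hωl) with ⟨u, h1, h2, rfl⟩ | ⟨u, h1, h2, rfl⟩ |
        ⟨j', rfl⟩
      · have : u = t := by simpa [shortW, readOp] using hval
        rw [this]
      · simp [readOp] at hωr
      · have := hval
        simp only [longW, readOp] at this
        omega
    obtain ⟨P, Q, R, hPQR, hsum⟩ := hatomic (readOp t) hρl rfl (shortW t) hωl rfl rfl
    have hPQRn : l = P ++ shortW t :: (Q ++ readOp t :: R) := by
      simp [hPQR, List.append_assoc]
    have hωneL : shortW t ≠ L := by rw [hLdef]; exact shortW_ne_longW (by omega)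
    have hρneL : readOp t ≠ L := by rw [hLdef]; exact readOp_ne_longW
    have hLloc : L ∈ P ∨ L ∈ Q ∨ L ∈ R := by
      have hh := hLl
      rw [hPQRn] at hh
      simp only [List.mem_append, List.mem_cons] at hh
      rcases hh with h | h | h | h | h
      · exact Or.inl h
      · exact absurd h.symm hωneL
      · exact Or.inr (Or.inl h)
      · exact absurd h.symm hρneL
      · exact Or.inr (Or.inr h)
    rcases hLloc with hLP | hLQ | hLR
    · -- L in P
      obtain ⟨P₁, P₂, rfl⟩ := List.append_of_mem hLP
      have hre : l = P₁ ++ L :: (P₂ ++ shortW t :: (Q ++ readOp t :: R)) := by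
        simp [hPQRn, List.append_assoc]
      have hLP₁ : L ∉ P₁ := (nodup_split (hre ▸ hnd)).1
      obtain ⟨hP₁, htail⟩ := split_unique (hln.symm.trans hre) hLl1 hLP₁
      have hrm : r ∈ P₂ ++ shortW t :: (Q ++ readOp t :: R) := by rw [← htail]; simp
      simp only [List.mem_append, List.mem_cons] at hrm
      rcases hrm with hrP₂ | hrω | hrQ | hrρ | hrR
      · obtain ⟨X, Y, rfl⟩ := List.append_of_mem hrP₂
        have hre2 : l2 ++ r :: l3 = X ++ r :: (Y ++ shortW t :: (Q ++ readOp t :: R)) := by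
          simp [htail, List.append_assoc]
        have hrX : r ∉ X := (nodup_split (hre2 ▸ hnt)).1
        obtain ⟨hl2e, hl3e⟩ := split_unique hre2 hrl2 hrX
        exact ⟨l1 ++ l2 ++ r :: L :: Y, Q, R, by simp [hl3e, List.append_assoc], hsum⟩
      · exact absurd (hrω.symm.trans hrdef) shortW_ne_readOp
      · obtain ⟨Q₁, Q₂, rfl⟩ := List.append_of_mem hrQ
        have hre2 : l2 ++ r :: l3 = (P₂ ++ shortW t :: Q₁) ++ r :: (Q₂ ++ readOp t :: R) := by
          simp [htail, List.append_assoc]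
        have hrX : r ∉ P₂ ++ shortW t :: Q₁ := (nodup_split (hre2 ▸ hnt)).1
        obtain ⟨hl2e, hl3e⟩ := split_unique hre2 hrl2 hrX
        exfalso
        have hLω : WBefore l L (shortW t) :=
          ⟨l1, P₂, Q₁ ++ r :: l3, by simp [hln, hl2e, List.append_assoc]⟩
        have hωr' : WBefore l (shortW t) r :=
          ⟨l1 ++ L :: P₂, Q₁, l3, by simp [hln, hl2e, List.append_assoc]⟩
        have hrρ' : WBefore l r (readOp t) :=
          ⟨l1 ++ L :: l2, Q₂, R, by simp [hlr, hl3e, List.append_assoc]⟩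
        have hcase : t + 2 ≤ i ∨ t = i - 1 ∨ t = i ∨ i + 1 ≤ t := by omega
        rcases hcase with hc | hc | hc | hc
        · have hlt : (readOp t).f < r.s := by
            rw [hrdef]; simp only [readOp]
            rw [hicast]
            have : (t : ℚ) + 2 ≤ (i : ℚ) := by exact_mod_cast hc
            push_cast; linarith
          exact wbefore_asymm hnd hrρ' (hvalid _ hρl _ hrl hlt)
        · have hrt : readOp t = r := by rw [hrdef, hc]
          have : r ∈ l3 := by rw [hl3e, ← hrt]; simp
          exact hrl3 this
        · subst hc
          exact wbefore_asymm hnd hLω hplace1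
        · have hlt : r.f < (shortW t).s := by
            rw [hrdef]; simp only [readOp, shortW]
            rw [hicast]
            have : (i : ℚ) + 1 ≤ (t : ℚ) := by exact_mod_cast hc
            push_cast; linarith
          exact wbefore_asymm hnd hωr' (hvalid _ hrl _ hωl hlt)
      · have hre2 : l2 ++ r :: l3 = (P₂ ++ shortW t :: Q) ++ r :: R := by
          simp [htail, ← hrρ, List.append_assoc]
        have hrX : r ∉ P₂ ++ shortW t :: Q := (nodup_split (hre2 ▸ hnt)).1
        obtain ⟨hl2e, hl3e⟩ := split_unique hre2 hrl2 hrX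
        refine ⟨l1 ++ P₂, Q, L :: l3, ?_, hsum⟩
        simp [hl2e, ← hrρ, List.append_assoc]
      · obtain ⟨X, Y, rfl⟩ := List.append_of_mem hrR
        have hre2 : l2 ++ r :: l3 = (P₂ ++ shortW t :: (Q ++ readOp t :: X)) ++ r :: Y := by
          simp [htail, List.append_assoc]
        have hrX : r ∉ P₂ ++ shortW t :: (Q ++ readOp t :: X) := (nodup_split (hre2 ▸ hnt)).1
        obtain ⟨hl2e, hl3e⟩ := split_unique hre2 hrl2 hrX
        refine ⟨l1 ++ P₂, Q, X ++ r :: L :: l3, ?_, hsum⟩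
        simp [hl2e, List.append_assoc]
    · -- L in Q
      obtain ⟨Q₁, Q₂, rfl⟩ := List.append_of_mem hLQ
      have hre : l = (P ++ shortW t :: Q₁) ++ L :: (Q₂ ++ readOp t :: R) := by
        simp [hPQRn, List.append_assoc]
      have hL1 : L ∉ P ++ shortW t :: Q₁ := (nodup_split (hre ▸ hnd)).1
      obtain ⟨hl1e, htail⟩ := split_unique (hln.symm.trans hre) hLl1 hL1
      have hrm : r ∈ Q₂ ++ readOp t :: R := by rw [← htail]; simp
      simp only [List.mem_append, List.mem_cons] at hrm
      rcases hrm with hrQ₂ | hrρ | hrR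
      · obtain ⟨X, Y, rfl⟩ := List.append_of_mem hrQ₂
        have hre2 : l2 ++ r :: l3 = X ++ r :: (Y ++ readOp t :: R) := by
          simp [htail, List.append_assoc]
        have hrX : r ∉ X := (nodup_split (hre2 ▸ hnt)).1
        obtain ⟨hl2e, hl3e⟩ := split_unique hre2 hrl2 hrX
        refine ⟨P, Q₁ ++ X ++ r :: L :: Y, R, ?_, ?_⟩
        · rw [hl1e, hl2e, hl3e]; simp [List.append_assoc]
        · have hsum' : (shortW t).wt + S (Q₁ ++ L :: (X ++ r :: Y)) ≤ k := hsum
          show (shortW t).wt + S (Q₁ ++ X ++ r :: L :: Y) ≤ k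
          simp only [S_append, S_cons] at hsum' ⊢
          omega
      · have hre2 : l2 ++ r :: l3 = Q₂ ++ r :: R := by rw [htail, ← hrρ]
        have hrX : r ∉ Q₂ := (nodup_split (hre2 ▸ hnt)).1
        obtain ⟨hl2e, hl3e⟩ := split_unique hre2 hrl2 hrX
        refine ⟨P, Q₁ ++ Q₂, L :: l3, ?_, ?_⟩
        · rw [hl1e, hl2e, ← hrρ]; simp [List.append_assoc]
        · have hsum' : (shortW t).wt + S (Q₁ ++ L :: Q₂) ≤ k := hsum
          show (shortW t).wt + S (Q₁ ++ Q₂) ≤ k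
          simp only [S_append, S_cons] at hsum' ⊢
          omega
      · obtain ⟨X, Y, rfl⟩ := List.append_of_mem hrR
        have hre2 : l2 ++ r :: l3 = (Q₂ ++ readOp t :: X) ++ r :: Y := by
          simp [htail, List.append_assoc]
        have hrX : r ∉ Q₂ ++ readOp t :: X := (nodup_split (hre2 ▸ hnt)).1
        obtain ⟨hl2e, hl3e⟩ := split_unique hre2 hrl2 hrX
        refine ⟨P, Q₁ ++ Q₂, X ++ r :: L :: l3, ?_, ?_⟩
        · rw [hl1e, hl2e]; simp [List.append_assoc]
        · have hsum' : (shortW t).wt + S (Q₁ ++ L :: Q₂) ≤ k := hsum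
          show (shortW t).wt + S (Q₁ ++ Q₂) ≤ k
          simp only [S_append, S_cons] at hsum' ⊢
          omega
    · -- L in R
      obtain ⟨R₁, R₂, rfl⟩ := List.append_of_mem hLR
      have hre : l = (P ++ shortW t :: (Q ++ readOp t :: R₁)) ++ L :: R₂ := by
        simp [hPQRn, List.append_assoc]
      have hL1 : L ∉ P ++ shortW t :: (Q ++ readOp t :: R₁) := (nodup_split (hre ▸ hnd)).1
      obtain ⟨hl1e, htail⟩ := split_unique (hln.symm.trans hre) hLl1 hL1
      refine ⟨P, Q, R₁ ++ l2 ++ r :: L :: l3, ?_, hsum⟩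
      simp [hl1e, List.append_assoc]
  · -- r before L
    exact ⟨l1 ++ l2, [], l3, by simp [List.append_assoc]⟩
  · -- L before shortW (i+1)
    have hsw : shortW (i + 1) ∈ l :=
      (hmem _).mpr (mem_reduction_iff.mpr (Or.inl ⟨i + 1, by omega, by omega, rfl⟩))
    have hrt : r.f < (shortW (i + 1)).s := by
      rw [hrdef]; simp only [readOp, shortW]
      rw [hicast]; push_cast; linarith
    have hwb : WBefore l r (shortW (i + 1)) := hvalid r hrl _ hsw hrt
    obtain ⟨Y1, Y2, hY⟩ := mem_suffix_of_wbefore hnd hlr hwb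
    exact ⟨l1 ++ l2 ++ [r], Y1, Y2, by simp [hY, List.append_assoc]⟩
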